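/- Let C_0, …, C_{p−1} be d×d complex matrices that are simultaneously triangularizable, i.e. there exists an invertible d×d matrix Q such that T_k := Q^{-1} C_k Q is upper triangular for every k = 0, …, p−1, and let M be the companion block matrix of C_0, …, C_{p−1}. Then the set of complex eigenvalues of M equals the union over j = 1, …, d of the sets of complex roots of the polynomials λ^p − ∑_{k=0}^{p−1} λ^k · (T_k)_{jj}. -/

import Mathlib

/-- The companion block matrix of `d×d` matrices `C 0, …, C (p-1)`: the `pd×pd`
block matrix with identity blocks `I_d` on the block superdiagonal, bottom block
row `(C 0, C 1, …, C (p-1))`, and zero blocks elsewhere. -/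
def companion {p d : ℕ} {R : Type*} [CommRing R]
    (C : Fin p → Matrix (Fin d) (Fin d) R) :
    Matrix (Fin p × Fin d) (Fin p × Fin d) R :=
  Matrix.of fun x y =>
    if (x.1 : ℕ) + 1 = p then (C y.1) x.2 y.2
    else if (y.1 : ℕ) = (x.1 : ℕ) + 1 then (if x.2 = y.2 then 1 else 0) else 0

/-- `lam • 1` minus the (scalar) companion matrix of the coefficients `a`. -/
def compD (p : ℕ) (lam : ℂ) (a : Fin p → ℂ) : Matrix (Fin p) (Fin p) ℂ :=
  Matrix.of fun k k' =>
    (if k = k' then lam else 0) -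
      (if (k : ℕ) + 1 = p then a k' else if (k' : ℕ) = (k : ℕ) + 1 then 1 else 0)

theorem compD_det (p : ℕ) (lam : ℂ) (a : Fin p → ℂ) :
    (compD p lam a).det = lam ^ p - ∑ k : Fin p, lam ^ (k : ℕ) * a k := by
  induction p with
  | zero => simp [Matrix.det_fin_zero]
  | succ n ih =>
    match n, ih with
    | 0, _ =>
      simp [Matrix.det_fin_one, compD]
    | (m+1), ih =>
      rw [Matrix.det_succ_column_zero]
      rw [Fin.sum_univ_succ]
      have h0 : (compD (m+2) lam a) 0 0 = lam := by
        simp [compD]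
      have hsub0 : ((compD (m+2) lam a).submatrix (Fin.succAbove 0) Fin.succ)
          = compD (m+1) lam (fun k => a k.succ) := by
        ext k k'
        simp only [Matrix.submatrix_apply, compD, Matrix.of_apply, Fin.succAbove_zero]
        congr 1
        · simp [Fin.succ_inj]
        · simp only [Fin.val_succ]
          by_cases h : (k : ℕ) + 1 = m + 1
          · rw [if_pos (by omega), if_pos h]
          · rw [if_neg (by omega), if_neg h]
            by_cases h2 : (k' : ℕ) = (k : ℕ) + 1
            · rw [if_pos (by omega), if_pos h2]
            · rw [if_neg (by omega), if_neg h2]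
      have hrest : ∑ i : Fin (m+1),
          (-1 : ℂ) ^ ((i.succ : Fin (m+2)) : ℕ) * (compD (m+2) lam a) i.succ 0 *
            ((compD (m+2) lam a).submatrix (Fin.succAbove i.succ) Fin.succ).det
          = - a 0 := by
        rw [Finset.sum_eq_single_of_mem (Fin.last m) (Finset.mem_univ _)]
        · have hlast : ((Fin.last m).succ : Fin (m+2)) = Fin.last (m+1) := by
            ext; simp
          rw [hlast]
          have hA : (compD (m+2) lam a) (Fin.last (m+1)) 0 = - a 0 := by
            simp [compD, Fin.ext_iff]
          have hL : ((compD (m+2) lam a).submatrix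
              (Fin.succAbove (Fin.last (m+1))) Fin.succ).det = (-1 : ℂ) ^ (m+1) := by
            rw [Matrix.det_of_lowerTriangular]
            · have : ∀ k : Fin (m+1), ((compD (m + 2) lam a).submatrix
                  (Fin.last (m + 1)).succAbove Fin.succ) k k = -1 := by
                intro k
                simp only [Matrix.submatrix_apply, compD, Matrix.of_apply,
                  Fin.succAbove_last, Fin.ext_iff, Fin.coe_castSucc, Fin.val_succ]
                rw [if_neg (by omega), if_neg (by omega)]
                norm_num
              rw [Finset.prod_congr rfl (fun k _ => this k), Finset.prod_const]
              simp
            · intro i j hij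
              replace hij : (i : ℕ) < (j : ℕ) := hij
              simp only [Matrix.submatrix_apply, compD, Matrix.of_apply,
                Fin.succAbove_last, Fin.ext_iff, Fin.coe_castSucc, Fin.val_succ]
              rw [if_neg (by omega), if_neg (by omega), if_neg (by omega)]
              ring
          rw [hA, hL]
          have : ((Fin.last (m+1) : Fin (m+2)) : ℕ) = m + 1 := rfl
          have h2 : (-1 : ℂ) ^ (m + 1 + (m + 1)) = 1 := by
            have h3 : m + 1 + (m + 1) = 2 * (m + 1) := by ring
            rw [h3, pow_mul]
            norm_num
          rw [this, mul_comm ((-1 : ℂ) ^ (m+1)) (-a 0), mul_assoc, ← pow_add, h2, mul_one]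
        · intro i _ hi
          have hA : (compD (m+2) lam a) i.succ 0 = 0 := by
            have hne : (i : ℕ) ≠ m := fun h => hi (Fin.ext (by simp [h]))
            have : (i : ℕ) < m := by have := i.isLt; omega
            simp only [compD, Matrix.of_apply, Fin.ext_iff, Fin.val_succ, Fin.val_zero]
            simp only [show ¬ ((i : ℕ) + 1 = 0) by omega, show ¬ (0 = (i : ℕ) + 1 + 1) by omega, if_false]
            split_ifs with h3
            · exact absurd h3 (by omega)
            ring
          rw [hA]; ring
      rw [hrest, h0, hsub0, ih]
      rw [Fin.sum_univ_succ (f := fun k : Fin (m+2) => lam ^ (k : ℕ) * a k)]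
      rw [mul_sub, Finset.mul_sum]
      simp only [Fin.val_zero, pow_zero, one_mul, Fin.val_succ]
      rw [Finset.sum_congr rfl (fun k _ => by ring : ∀ k ∈ (Finset.univ : Finset (Fin (m+1))),
        lam * (lam ^ (k : ℕ) * a k.succ) = lam ^ ((k : ℕ)+1) * a k.succ)]
      ring

theorem det_smul_one_sub_companion {p d : ℕ} (T : Fin p → Matrix (Fin d) (Fin d) ℂ)
    (hT : ∀ k : Fin p, ∀ i j : Fin d, j < i → T k i j = 0) (lam : ℂ) :
    (lam • (1 : Matrix (Fin p × Fin d) (Fin p × Fin d) ℂ) - companion T).det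
      = ∏ j : Fin d, (lam ^ p - ∑ k : Fin p, lam ^ (k : ℕ) * T k j j) := by
  have hbt : (lam • (1 : Matrix (Fin p × Fin d) (Fin p × Fin d) ℂ) - companion T).BlockTriangular
      Prod.snd := by
    intro x y hxy
    have hne : x ≠ y := by
      intro h; rw [h] at hxy; exact lt_irrefl _ hxy
    simp only [Matrix.sub_apply, Matrix.smul_apply, Matrix.one_apply, companion,
      Matrix.of_apply, if_neg hne, smul_zero, zero_sub, neg_eq_zero]
    by_cases h1 : (x.1 : ℕ) + 1 = p
    · rw [if_pos h1]
      exact hT y.1 x.2 y.2 hxy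
    · rw [if_neg h1]
      by_cases h2 : (y.1 : ℕ) = (x.1 : ℕ) + 1
      · rw [if_pos h2, if_neg (fun h => absurd (h ▸ hxy) (lt_irrefl _))]
      · rw [if_neg h2]
  rw [hbt.det_fintype]
  apply Finset.prod_congr rfl
  intro j _
  rw [← Matrix.det_submatrix_equiv_self
    (⟨fun k => ⟨(k, j), rfl⟩, fun x => x.1.1, fun k => rfl,
      fun x => Subtype.ext (Prod.ext rfl x.2.symm)⟩ :
        Fin p ≃ {x : Fin p × Fin d // x.snd = j}),
    ← compD_det p lam (fun k => T k j j)]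
  congr 1
  ext k k'
  simp only [Matrix.submatrix_apply, Matrix.toSquareBlock_def, compD, Matrix.of_apply,
    Matrix.sub_apply, Matrix.smul_apply, Matrix.one_apply, companion, Equiv.coe_fn_mk,
    Prod.mk.injEq, and_true, smul_eq_mul, mul_ite, mul_one, mul_zero, if_true, eq_self_iff_true]

theorem companion_mul_blockdiag {p d : ℕ} (C T : Fin p → Matrix (Fin d) (Fin d) ℂ)
    (Q : Matrix (Fin d) (Fin d) ℂ) (h : ∀ k, C k * Q = Q * T k) :
    companion C * (Matrix.of fun x y : Fin p × Fin d => if x.1 = y.1 then Q x.2 y.2 else 0)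
      = (Matrix.of fun x y : Fin p × Fin d => if x.1 = y.1 then Q x.2 y.2 else 0)
        * companion T := by
  ext ⟨k, i⟩ ⟨k', i'⟩
  simp only [Matrix.mul_apply, Fintype.sum_prod_type, companion, Matrix.of_apply]
  have hL : ∀ m : Fin p, ∀ j : Fin d,
      (if (k : ℕ) + 1 = p then (C m) i j
        else if (m : ℕ) = (k : ℕ) + 1 then (if i = j then 1 else 0) else 0) *
        (if m = k' then Q j i' else 0)
      = if m = k' then
          (if (k : ℕ) + 1 = p then (C k') i j
            else if (k' : ℕ) = (k : ℕ) + 1 then (if i = j then 1 else 0) else 0) * Q j i'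
        else 0 := by
    intro m j
    by_cases hm : m = k'
    · subst hm; simp
    · simp [hm]
  have hR : ∀ m : Fin p, ∀ j : Fin d,
      (if k = m then Q i j else 0) *
        (if (m : ℕ) + 1 = p then (T k') j i'
          else if (k' : ℕ) = (m : ℕ) + 1 then (if j = i' then 1 else 0) else 0)
      = if m = k then
          Q i j * (if (k : ℕ) + 1 = p then (T k') j i'
            else if (k' : ℕ) = (k : ℕ) + 1 then (if j = i' then 1 else 0) else 0)
        else 0 := by
    intro m j
    by_cases hm : m = k
    · subst hm; simp
    · rw [if_neg (fun hh => hm hh.symm), if_neg hm, zero_mul]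
  simp_rw [hL, hR]
  rw [show (∑ m : Fin p, ∑ j : Fin d, if m = k' then
        (if (k : ℕ) + 1 = p then (C k') i j
          else if (k' : ℕ) = (k : ℕ) + 1 then (if i = j then 1 else 0) else 0) * Q j i'
      else 0) = ∑ j : Fin d, ∑ m : Fin p, if m = k' then
        (if (k : ℕ) + 1 = p then (C k') i j
          else if (k' : ℕ) = (k : ℕ) + 1 then (if i = j then 1 else 0) else 0) * Q j i'
      else 0 from Finset.sum_comm]
  rw [show (∑ m : Fin p, ∑ j : Fin d, if m = k then
        Q i j * (if (k : ℕ) + 1 = p then (T k') j i'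
          else if (k' : ℕ) = (k : ℕ) + 1 then (if j = i' then 1 else 0) else 0)
      else 0) = ∑ j : Fin d, ∑ m : Fin p, if m = k then
        Q i j * (if (k : ℕ) + 1 = p then (T k') j i'
          else if (k' : ℕ) = (k : ℕ) + 1 then (if j = i' then 1 else 0) else 0)
      else 0 from Finset.sum_comm]
  simp only [Finset.sum_ite_eq', Finset.mem_univ, if_true]
  by_cases h1 : (k : ℕ) + 1 = p
  · simp only [if_pos h1]
    have := congrFun (congrFun (h k') i) i'
    simpa [Matrix.mul_apply] using this
  · simp only [if_neg h1]
    by_cases h2 : (k' : ℕ) = (k : ℕ) + 1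
    · simp [if_pos h2, ite_mul, mul_ite, mul_zero, zero_mul, Finset.sum_ite_eq,
        Finset.sum_ite_eq']
    · simp [if_neg h2]

theorem stmt_6 {p d : ℕ} (C : Fin p → Matrix (Fin d) (Fin d) ℂ)
    (Q : Matrix (Fin d) (Fin d) ℂ) (hQ : IsUnit Q)
    (hupper : ∀ k : Fin p, ∀ i j : Fin d, j < i → (Q⁻¹ * C k * Q) i j = 0) :
    spectrum ℂ (companion C) =
      ⋃ j : Fin d,
        {lam : ℂ | lam ^ p - ∑ k : Fin p, lam ^ (k : ℕ) * (Q⁻¹ * C k * Q) j j = 0} := by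
  set T : Fin p → Matrix (Fin d) (Fin d) ℂ := fun k => Q⁻¹ * C k * Q with hTdef
  have hdet : IsUnit Q.det := (Matrix.isUnit_iff_isUnit_det Q).mp hQ
  have hQQinv : Q * Q⁻¹ = 1 := Matrix.mul_nonsing_inv Q hdet
  have hcomm : ∀ k, C k * Q = Q * T k := by
    intro k
    rw [hTdef]
    calc C k * Q = (Q * Q⁻¹) * (C k * Q) := by rw [hQQinv, one_mul]
    _ = Q * (Q⁻¹ * C k * Q) := by noncomm_ring
  -- the block diagonal matrix P and its determinant
  set P : Matrix (Fin p × Fin d) (Fin p × Fin d) ℂ :=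
    Matrix.of fun x y : Fin p × Fin d => if x.1 = y.1 then Q x.2 y.2 else 0 with hPdef
  have hPdet : P.det = Q.det ^ p := by
    have : P = (Matrix.blockDiagonal fun _ : Fin p => Q).submatrix
        (Equiv.prodComm (Fin p) (Fin d)) (Equiv.prodComm (Fin p) (Fin d)) := by
      ext ⟨k, i⟩ ⟨k', i'⟩
      simp [hPdef, Matrix.blockDiagonal_apply, eq_comm]
    rw [this, Matrix.det_submatrix_equiv_self, Matrix.det_blockDiagonal,
      Finset.prod_const, Finset.card_univ, Fintype.card_fin]
  have hPdet_ne : P.det ≠ 0 := by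
    rw [hPdet]
    exact pow_ne_zero _ hdet.ne_zero
  -- det identity for all lam
  have key : ∀ lam : ℂ,
      (lam • (1 : Matrix (Fin p × Fin d) (Fin p × Fin d) ℂ) - companion C).det
        = ∏ j : Fin d, (lam ^ p - ∑ k : Fin p, lam ^ (k : ℕ) * T k j j) := by
    intro lam
    have hmul : (lam • (1 : Matrix (Fin p × Fin d) (Fin p × Fin d) ℂ) - companion C) * P
        = P * (lam • (1 : Matrix (Fin p × Fin d) (Fin p × Fin d) ℂ) - companion T) := by
      rw [Matrix.sub_mul, Matrix.mul_sub, companion_mul_blockdiag C T Q hcomm,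
        Matrix.smul_mul, Matrix.mul_smul, Matrix.one_mul, Matrix.mul_one]
    have := congrArg Matrix.det hmul
    rw [Matrix.det_mul, Matrix.det_mul] at this
    have h2 : (lam • (1 : Matrix (Fin p × Fin d) (Fin p × Fin d) ℂ) - companion C).det
        = (lam • (1 : Matrix (Fin p × Fin d) (Fin p × Fin d) ℂ) - companion T).det := by
      apply mul_right_cancel₀ hPdet_ne
      rw [this, mul_comm]
    rw [h2, det_smul_one_sub_companion T hupper lam]
  ext lam
  rw [spectrum.mem_iff, Set.mem_iUnion]
  rw [Algebra.algebraMap_eq_smul_one]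
  rw [← not_iff_comm]
  constructor
  · intro h
    rw [Matrix.isUnit_iff_isUnit_det, isUnit_iff_ne_zero, key]
    intro hzero
    rcases Finset.prod_eq_zero_iff.mp hzero with ⟨j, _, hj⟩
    exact h ⟨j, hj⟩
  · intro h hmem
    rcases hmem with ⟨j, hj⟩
    rw [Matrix.isUnit_iff_isUnit_det, isUnit_iff_ne_zero, key] at h
    exact h (Finset.prod_eq_zero (Finset.mem_univ j) hj)
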